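/- Let G=(W,E) be a finite simple graph with W nonempty and let k be a natural number. Construct the parliamentary election whose running parties are p_1 and o_2, with spoiler parties S = {s_w : w ∈ W} available for addition, and with two voters per vertex w ∈ W: one voter ranking the parties {s_u : u ∈ N[w]} first (in some fixed order), then o_2, then p_1, then all remaining parties; and one voter ranking o_2 ≻ p_1 ≻ (all remaining parties). Let the coalition be C = {p_1} ∪ S, with no electoral threshold. Then G has a dominating set of size at most k if and only if there exists a set S⁺ ⊆ S with |S⁺| ≤ k such that, in the election whose running parties are {p_1, o_2} ∪ S⁺, the vote fraction of {p_1} ∪ S⁺ is at least 1/2. -/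

import Mathlib

open scoped Classical

section Defs

variable {U V : Type*}

/-- `p` is the most-preferred member of the running set `P` under the linear order `L`
(greater means more preferred). -/
def TopOf (L : LinearOrder U) (P : Finset U) (p : U) : Prop :=
  p ∈ P ∧ ∀ q ∈ P, q ≠ p → L.lt q p

/-- Number of voters whose most-preferred running party lies in `A`. -/
noncomputable def votes [Fintype V] (pref : V → LinearOrder U) (P A : Finset U) : ℕ :=
  (Finset.univ.filter fun v : V => ∃ p ∈ A, TopOf (pref v) P p).card

/-- Fraction of voters whose most-preferred running party lies in `A`. -/
noncomputable def voteFrac [Fintype V] (pref : V → LinearOrder U) (P A : Finset U) : ℚ :=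
  (votes pref P A : ℚ) / (Fintype.card V : ℚ)

/-- Total number of votes received by active parties (receiving at least `T` votes) among `A`. -/
noncomputable def activeVotes [Fintype V] (pref : V → LinearOrder U) (P : Finset U) (T : ℕ)
    (A : Finset U) : ℕ :=
  ∑ p ∈ A, if T ≤ votes pref P {p} then votes pref P {p} else 0

/-- Active-vote fraction of `A`. -/
noncomputable def activeFrac [Fintype V] (pref : V → LinearOrder U) (P : Finset U) (T : ℕ)
    (A : Finset U) : ℚ :=
  (activeVotes pref P T A : ℚ) / (activeVotes pref P T P : ℚ)

/-- The linear order `L` respects the tier function `t` (smaller tier = more preferred). -/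
def PrefTiers (L : LinearOrder U) (t : U → ℕ) : Prop :=
  ∀ a b : U, t a < t b → L.lt b a

/-- Pairs `(p, q)` with `p ≻ q` under `L` and `q ≻ p` under `L'`. -/
noncomputable def invPairs [Fintype U] (L L' : LinearOrder U) : Finset (U × U) :=
  Finset.univ.filter fun pq : U × U => L.lt pq.2 pq.1 ∧ L'.lt pq.1 pq.2

/-- Swap-bribery cost of replacing `L` by `L'` with swap-price function `sw`. -/
noncomputable def swapCost [Fintype U] (L L' : LinearOrder U) (sw : U → U → ℝ) : ℝ :=
  ∑ pq ∈ invPairs L L', sw pq.1 pq.2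

end Defs

section Aux

private lemma topOf_unique {U : Type*} (L : LinearOrder U) {P : Finset U} {p q : U}
    (hp : TopOf L P p) (hq : TopOf L P q) : p = q := by
  letI := L
  by_contra h
  exact lt_asymm (hp.2 q hq.1 (Ne.symm h)) (hq.2 p hp.1 h)

private lemma exists_topOf {U : Type*} (L : LinearOrder U) {P : Finset U} (h : P.Nonempty) :
    ∃ p, TopOf L P p := by
  letI := L
  obtain ⟨p, hp, hmax⟩ := P.exists_max_image id h
  exact ⟨p, hp, fun q hq hne => lt_of_le_of_ne (hmax q hq) hne⟩

private lemma votes_eq {W : Type*} [Fintype W] [DecidableEq W]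
    (G : SimpleGraph W) [DecidableRel G.Adj]
    (pref : W ⊕ W → LinearOrder (W ⊕ Fin 2))
    (hprefA : ∀ w : W, PrefTiers (pref (Sum.inl w))
      (Sum.elim (fun u => if u = w ∨ G.Adj w u then (0 : ℕ) else 3)
        (fun j : Fin 2 => if j = 1 then 1 else 2)))
    (hprefB : ∀ w : W, PrefTiers (pref (Sum.inr w))
      (Sum.elim (fun _ => (2 : ℕ)) (fun j : Fin 2 => if j = 1 then 0 else 1)))
    (Sp : Finset (W ⊕ Fin 2)) (hSp : Sp ⊆ Finset.univ.image Sum.inl) :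
    votes pref ({Sum.inr 0, Sum.inr 1} ∪ Sp) (insert (Sum.inr 0) Sp)
      = (Finset.univ.filter fun w : W =>
          ∃ u, Sum.inl u ∈ Sp ∧ (u = w ∨ G.Adj w u)).card := by
  classical
  set P : Finset (W ⊕ Fin 2) := {Sum.inr 0, Sum.inr 1} ∪ Sp with hPdef
  set A : Finset (W ⊕ Fin 2) := insert (Sum.inr 0) Sp with hAdef
  have hP1 : (Sum.inr 1 : W ⊕ Fin 2) ∈ P := by simp [hPdef]
  have hnotA : (Sum.inr (1 : Fin 2) : W ⊕ Fin 2) ∉ A := by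
    intro h
    rcases Finset.mem_insert.1 h with h | h
    · exact absurd (Sum.inr.inj h) (by decide)
    · obtain ⟨u, _, hu⟩ := Finset.mem_image.1 (hSp h)
      exact Sum.inl_ne_inr hu
  have keyA : ∀ w : W, (∃ p ∈ A, TopOf (pref (Sum.inl w)) P p) ↔
      ∃ u, Sum.inl u ∈ Sp ∧ (u = w ∨ G.Adj w u) := by
    intro w
    set L := pref (Sum.inl w) with hL
    constructor
    · rintro ⟨p, hpA, hp⟩
      have hp0 : p ≠ Sum.inr 0 := by
        rintro rfl
        have h1 : L.lt (Sum.inr 0) (Sum.inr 1) :=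
          hprefA w (Sum.inr 1) (Sum.inr 0) (by norm_num)
        have h2 : L.lt (Sum.inr 1) (Sum.inr 0) :=
          hp.2 (Sum.inr 1) hP1 (by simp)
        letI := L; exact lt_asymm h1 h2
      have hpSp : p ∈ Sp := by
        rcases Finset.mem_insert.1 hpA with h | h
        · exact absurd h hp0
        · exact h
      obtain ⟨u, _, rfl⟩ := Finset.mem_image.1 (hSp hpSp)
      refine ⟨u, hpSp, ?_⟩
      by_contra h
      have h1 : L.lt (Sum.inl u) (Sum.inr 1) :=
        hprefA w (Sum.inr 1) (Sum.inl u) (by simp [h])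
      have h2 : L.lt (Sum.inr 1) (Sum.inl u) :=
        hp.2 (Sum.inr 1) hP1 (by simp)
      letI := L; exact lt_asymm h1 h2
    · rintro ⟨u, huSp, hu⟩
      have huP : (Sum.inl u : W ⊕ Fin 2) ∈ P := Finset.mem_union_right _ huSp
      obtain ⟨t, ht⟩ := exists_topOf L ⟨_, hP1⟩
      refine ⟨t, ?_, ht⟩
      rcases Finset.mem_union.1 ht.1 with htP | htSp
      · exfalso
        have htne : (Sum.inl u : W ⊕ Fin 2) ≠ t := by
          rcases Finset.mem_insert.1 htP with rfl | htP
          · simp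
          · rcases Finset.mem_singleton.1 htP with rfl
            simp
        have h1 : L.lt t (Sum.inl u) := by
          rcases Finset.mem_insert.1 htP with rfl | htP
          · exact hprefA w (Sum.inl u) (Sum.inr 0) (by simp [hu])
          · rcases Finset.mem_singleton.1 htP with rfl
            exact hprefA w (Sum.inl u) (Sum.inr 1) (by simp [hu])
        have h2 : L.lt (Sum.inl u) t := ht.2 (Sum.inl u) huP htne
        letI := L; exact lt_asymm h1 h2
      · exact Finset.mem_insert_of_mem htSp
  have keyB : ∀ w : W, ¬ (∃ p ∈ A, TopOf (pref (Sum.inr w)) P p) := by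
    intro w
    rintro ⟨p, hpA, hp⟩
    set L := pref (Sum.inr w) with hL
    have htop : TopOf L P (Sum.inr 1) := by
      refine ⟨hP1, fun q hq hqne => ?_⟩
      rcases Finset.mem_union.1 hq with hq' | hq'
      · rcases Finset.mem_insert.1 hq' with rfl | hq'
        · exact hprefB w (Sum.inr 1) (Sum.inr 0) (by norm_num)
        · rcases Finset.mem_singleton.1 hq' with rfl
          exact absurd rfl hqne
      · obtain ⟨u, _, rfl⟩ := Finset.mem_image.1 (hSp hq')
        exact hprefB w (Sum.inr 1) (Sum.inl u) (by norm_num)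
    exact hnotA (topOf_unique L hp htop ▸ hpA)
  rw [votes]
  have hset : (Finset.univ.filter fun v : W ⊕ W => ∃ p ∈ A, TopOf (pref v) P p)
      = (Finset.univ.filter fun w : W =>
          ∃ u, Sum.inl u ∈ Sp ∧ (u = w ∨ G.Adj w u)).image Sum.inl := by
    ext v
    cases v with
    | inl w =>
      simp only [Finset.mem_filter, Finset.mem_univ, true_and, Finset.mem_image]
      rw [keyA w]
      constructor
      · rintro ⟨u, hu⟩
        exact ⟨w, ⟨u, hu⟩, rfl⟩
      · rintro ⟨w', hw', heq⟩
        cases Sum.inl_injective heq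
        exact hw'
    | inr w =>
      simp only [Finset.mem_filter, Finset.mem_univ, true_and, Finset.mem_image]
      constructor
      · intro h
        exact absurd h (keyB w)
      · rintro ⟨w', -, h⟩
        exact (Sum.inl_ne_inr h).elim
  rw [hset, Finset.card_image_of_injective _ Sum.inl_injective]

end Aux

/-- Election (adding coalition parties, J objective, no threshold):
running parties $p_1$ (= `Sum.inr 0`) and $o_2$ (= `Sum.inr 1`); spoiler parties
$s_w$ (= `Sum.inl w`), one per vertex.  Per vertex $w$: one voter ranking
$\{s_u : u ∈ N[w]\}$ first, then $o_2$, then $p_1$, then the rest; and one voter ranking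
$o_2 ≻ p_1 ≻$ rest.  Then $G$ has a dominating set of size at most $k$ iff at most $k$
spoiler parties can be added so that $\{p_1\} ∪ S^+$ gets vote fraction at least $1/2$. -/
theorem acp_dominating_set_reduction
    {W : Type*} [Fintype W] [DecidableEq W] [Nonempty W]
    (G : SimpleGraph W) [DecidableRel G.Adj] (k : ℕ)
    (pref : W ⊕ W → LinearOrder (W ⊕ Fin 2))
    (hprefA : ∀ w : W, PrefTiers (pref (Sum.inl w))
      (Sum.elim (fun u => if u = w ∨ G.Adj w u then (0 : ℕ) else 3)
        (fun j : Fin 2 => if j = 1 then 1 else 2)))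
    (hprefB : ∀ w : W, PrefTiers (pref (Sum.inr w))
      (Sum.elim (fun _ => (2 : ℕ)) (fun j : Fin 2 => if j = 1 then 0 else 1))) :
    (∃ W' : Finset W, W'.card ≤ k ∧ ∀ w : W, ∃ u ∈ W', u = w ∨ G.Adj u w) ↔
    (∃ Sp : Finset (W ⊕ Fin 2), Sp ⊆ Finset.univ.image Sum.inl ∧ Sp.card ≤ k ∧
      (1 : ℚ) / 2 ≤ voteFrac pref ({Sum.inr 0, Sum.inr 1} ∪ Sp) (insert (Sum.inr 0) Sp)) := by
  classical
  have npos : 0 < Fintype.card W := Fintype.card_pos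
  have hcardV : (Fintype.card (W ⊕ W) : ℚ) = (Fintype.card W : ℚ) + Fintype.card W := by
    rw [Fintype.card_sum]; push_cast; ring
  have hden : (0 : ℚ) < (Fintype.card W : ℚ) + Fintype.card W := by
    have : (0 : ℚ) < (Fintype.card W : ℚ) := by exact_mod_cast npos
    linarith
  constructor
  · rintro ⟨W', hWk, hdom⟩
    refine ⟨W'.image Sum.inl, ?_, ?_, ?_⟩
    · exact Finset.image_subset_image (Finset.subset_univ W')
    · exact le_trans Finset.card_image_le hWk
    · have hSp : W'.image (Sum.inl : W → W ⊕ Fin 2) ⊆ Finset.univ.image Sum.inl :=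
        Finset.image_subset_image (Finset.subset_univ W')
      rw [voteFrac, votes_eq G pref hprefA hprefB _ hSp]
      have hfull : (Finset.univ.filter fun w : W =>
          ∃ u, Sum.inl u ∈ W'.image (Sum.inl : W → W ⊕ Fin 2) ∧ (u = w ∨ G.Adj w u)) = Finset.univ := by
        apply Finset.eq_univ_of_forall
        intro w
        obtain ⟨u, huW', hu⟩ := hdom w
        refine Finset.mem_filter.2 ⟨Finset.mem_univ _, u,
          Finset.mem_image_of_mem _ huW', ?_⟩
        rcases hu with rfl | hadj
        · exact Or.inl rfl
        · exact Or.inr (G.adj_symm hadj)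
      rw [hfull, Finset.card_univ, hcardV]
      rw [div_le_div_iff₀ (by norm_num) hden]
      ring_nf
      linarith
  · rintro ⟨Sp, hSp, hk, hfrac⟩
    rw [voteFrac, votes_eq G pref hprefA hprefB _ hSp, hcardV,
      div_le_div_iff₀ (by norm_num) hden] at hfrac
    set F := Finset.univ.filter fun w : W =>
      ∃ u, Sum.inl u ∈ Sp ∧ (u = w ∨ G.Adj w u) with hF
    have hFcard : Fintype.card W ≤ F.card := by
      have : (Fintype.card W : ℚ) ≤ (F.card : ℚ) := by linarith
      exact_mod_cast this
    have hFuniv : F = Finset.univ :=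
      Finset.eq_univ_of_card _ (le_antisymm (Finset.card_le_univ F) hFcard)
    refine ⟨Finset.univ.filter fun u : W => Sum.inl u ∈ Sp, ?_, ?_⟩
    · calc (Finset.univ.filter fun u : W => Sum.inl u ∈ Sp).card
          = ((Finset.univ.filter fun u : W => Sum.inl u ∈ Sp).image Sum.inl).card :=
            (Finset.card_image_of_injective _ Sum.inl_injective).symm
        _ ≤ Sp.card := by
            apply Finset.card_le_card
            intro x hx
            obtain ⟨u, hu, rfl⟩ := Finset.mem_image.1 hx
            exact (Finset.mem_filter.1 hu).2
        _ ≤ k := hk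
    · intro w
      have hw : w ∈ F := hFuniv ▸ Finset.mem_univ w
      obtain ⟨u, huSp, hu⟩ := (Finset.mem_filter.1 hw).2
      refine ⟨u, Finset.mem_filter.2 ⟨Finset.mem_univ _, huSp⟩, ?_⟩
      rcases hu with rfl | hadj
      · exact Or.inl rfl
      · exact Or.inr (G.adj_symm hadj)
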